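/- Let α ∈ ℂ with Re(α) ∈ (0,1), let λ ∈ ℂ, x₀ ∈ ℂ, and let x : ℕ → ℂ be the unique sequence with x(0) = x₀ and x(t+1) = x₀ + (λ − 1) · ∑_{j=0}^{t} φ̃_α(t − j) · x(j) for all t ∈ ℕ. Then there exists R ≥ 1 such that for every z ∈ ℂ with |z| > R, the Z-transform X(z) := ∑_{t=0}^∞ x(t) z^{−t} converges absolutely and satisfies (z(1 − z^{−1})^α − (λ − 1)) · X(z) = z(1 − z^{−1})^{α−1} · x₀. -/

import Mathlib

open Filter Topology

/-- The sequence `φ̃_α(n) = Γ(n+α)/(Γ(α)Γ(n+1))` from the paper. -/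
noncomputable def phiTilde (α : ℂ) (n : ℕ) : ℂ :=
  Complex.Gamma (n + α) / (Complex.Gamma α * Complex.Gamma (n + 1))


lemma phiTilde_zero {α : ℂ} (hα : 0 < α.re) : phiTilde α 0 = 1 := by
  simp [phiTilde, Complex.Gamma_one, Complex.Gamma_ne_zero_of_re_pos hα]

lemma phiTilde_succ {α : ℂ} (hα : 0 < α.re) (n : ℕ) :
    ((n : ℂ) + 1) * phiTilde α (n + 1) = ((n : ℂ) + α) * phiTilde α n := by
  have hnα : ((n : ℂ) + α) ≠ 0 := by
    intro h
    have : ((n : ℂ) + α).re = 0 := by rw [h]; simp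
    simp only [Complex.add_re, Complex.natCast_re] at this
    have : (0:ℝ) < n + α.re := by positivity
    linarith
  have hn1 : ((n : ℂ) + 1) ≠ 0 := by
    exact_mod_cast Nat.cast_add_one_ne_zero (R := ℂ) n
  have hΓα : Complex.Gamma α ≠ 0 := Complex.Gamma_ne_zero_of_re_pos hα
  have hΓn1 : Complex.Gamma ((n : ℂ) + 1) ≠ 0 := by
    apply Complex.Gamma_ne_zero_of_re_pos
    simp only [Complex.add_re, Complex.natCast_re, Complex.one_re]
    positivity
  have h1 : Complex.Gamma ((n : ℂ) + 1 + α) = ((n : ℂ) + α) * Complex.Gamma ((n : ℂ) + α) := by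
    rw [show (n : ℂ) + 1 + α = ((n : ℂ) + α) + 1 by ring, Complex.Gamma_add_one _ hnα]
  have h2 : Complex.Gamma ((n : ℂ) + 1 + 1) = ((n : ℂ) + 1) * Complex.Gamma ((n : ℂ) + 1) :=
    Complex.Gamma_add_one _ hn1
  simp only [phiTilde, Nat.cast_add, Nat.cast_one, h1, h2]
  field_simp

lemma phiTilde_bound {α : ℂ} (hα : 0 < α.re) (n : ℕ) :
    ‖phiTilde α n‖ ≤ (max 1 (‖α‖)) ^ n := by
  induction n with
  | zero => simp [phiTilde_zero hα]
  | succ m ih =>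
    set K := max 1 (‖α‖) with hK
    have hK1 : (1:ℝ) ≤ K := le_max_left _ _
    have hKα : ‖α‖ ≤ K := le_max_right _ _
    have key := phiTilde_succ hα m
    have hm1 : ‖(m : ℂ) + 1‖ = (m : ℝ) + 1 := by
      rw [show ((m : ℂ) + 1) = ((m + 1 : ℕ) : ℂ) by push_cast; ring]
      rw [Complex.norm_natCast]; push_cast; ring
    have habs : ((m : ℝ) + 1) * ‖phiTilde α (m + 1)‖
        = ‖(m : ℂ) + α‖ * ‖phiTilde α m‖ := by
      rw [← hm1, ← norm_mul, key, norm_mul]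
    have hub : ‖(m : ℂ) + α‖ ≤ ((m : ℝ) + 1) * K := by
      calc ‖(m : ℂ) + α‖ ≤ ‖(m : ℂ)‖ + ‖α‖ :=
            norm_add_le _ _
        _ = (m : ℝ) + ‖α‖ := by rw [Complex.norm_natCast]
        _ ≤ (m : ℝ) * K + K := by
            have : (m : ℝ) ≤ (m : ℝ) * K := le_mul_of_one_le_right (by positivity) hK1
            linarith
        _ = ((m : ℝ) + 1) * K := by ring
    have hpos : (0:ℝ) < (m : ℝ) + 1 := by positivity
    have := mul_le_mul_of_nonneg_right hub (norm_nonneg (phiTilde α m))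
    rw [← habs] at this
    have h2 : ‖phiTilde α (m + 1)‖ ≤ K * ‖phiTilde α m‖ := by
      nlinarith [norm_nonneg (phiTilde α (m+1)), norm_nonneg (phiTilde α m)]
    calc ‖phiTilde α (m + 1)‖ ≤ K * ‖phiTilde α m‖ := h2
      _ ≤ K * K ^ m := by
          apply mul_le_mul_of_nonneg_left ih (by linarith)
      _ = K ^ (m + 1) := by ring

set_option maxHeartbeats 1000000 in
lemma binom {α : ℂ} (hα : 0 < α.re) {w : ℂ}
    (hw : ‖w‖ < (2 * (max 1 (‖α‖) + 1))⁻¹) :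
    (1 - w) ^ α * ∑' n : ℕ, phiTilde α n * w ^ n = 1 := by
  set K := max 1 (‖α‖) with hKdef
  have hK1 : (1:ℝ) ≤ K := le_max_left _ _
  set r : ℝ := (2 * (K + 1))⁻¹ with hrdef
  have hrpos : 0 < r := by positivity
  have hr4 : r ≤ 4⁻¹ := by
    rw [hrdef]
    rw [inv_le_inv₀ (by positivity) (by norm_num)]
    linarith
  have hKr : K * r ≤ 2⁻¹ := by
    rw [hrdef]
    rw [mul_inv_le_iff₀ (by positivity)]
    nlinarith
  set s : Set ℂ := Metric.ball (0:ℂ) r with hsdef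
  have hws : w ∈ s := by
    rw [hsdef, Metric.mem_ball, dist_zero_right]
    exact hw
  have h0s : (0:ℂ) ∈ s := by simp [hsdef, hrpos]
  -- summable bound for derivatives
  set u : ℕ → ℝ := fun n => 2 * K * ((n : ℝ) * (2⁻¹ : ℝ) ^ n) with hudef
  have hu : Summable u := by
    apply Summable.mul_left
    have := summable_pow_mul_geometric_of_norm_lt_one (R := ℝ) 1 (r := 2⁻¹) (by norm_num)
    simpa using this
  -- bounds on norms inside ball
  have hφK : ∀ n : ℕ, ‖phiTilde α n‖ ≤ K ^ n := fun n => phiTilde_bound hα n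
  have hderiv_bound : ∀ (n : ℕ), ∀ y ∈ s, ‖phiTilde α n * ((n : ℂ) * y ^ (n - 1))‖ ≤ u n := by
    intro n y hy
    have hyr : ‖y‖ ≤ r := by
      rw [hsdef, Metric.mem_ball, dist_zero_right] at hy; linarith
    cases n with
    | zero => simp [hudef]
    | succ m =>
      rw [norm_mul, norm_mul, norm_pow, Complex.norm_natCast]
      simp only [Nat.add_sub_cancel]
      have h1 : ‖phiTilde α (m+1)‖ * (((m:ℝ) + 1) * ‖y‖ ^ m) ≤
          K ^ (m+1) * (((m:ℝ)+1) * r ^ m) := by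
        apply mul_le_mul (hφK _) _ (by positivity) (by positivity)
        apply mul_le_mul_of_nonneg_left _ (by positivity)
        exact pow_le_pow_left₀ (norm_nonneg _) hyr m
      have h2 : K ^ (m+1) * (((m:ℝ)+1) * r ^ m) ≤ u (m+1) := by
        have hKrm : K ^ (m+1) * r ^ m = K * (K * r) ^ m := by ring
        have : (K * r) ^ m ≤ (2⁻¹:ℝ) ^ m :=
          pow_le_pow_left₀ (by positivity) hKr m
        rw [hudef]
        simp only []
        push_cast
        calc K ^ (m+1) * (((m:ℝ)+1) * r ^ m) = ((m:ℝ)+1) * (K * (K*r)^m) := by ring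
          _ ≤ ((m:ℝ)+1) * (K * (2⁻¹:ℝ)^m) := by
              apply mul_le_mul_of_nonneg_left _ (by positivity)
              apply mul_le_mul_of_nonneg_left this (by linarith)
          _ = 2 * K * (((m:ℝ)+1) * (2⁻¹:ℝ) ^ (m+1)) := by
              rw [pow_succ]; ring
      push_cast at h1 h2 ⊢
      linarith
  have hderiv : ∀ (n : ℕ), ∀ y ∈ s,
      HasDerivAt (fun z : ℂ => phiTilde α n * z ^ n) (phiTilde α n * ((n:ℂ) * y ^ (n-1))) y := by
    intro n y _
    exact (hasDerivAt_pow n y).const_mul _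
  have hsum0 : Summable (fun n : ℕ => phiTilde α n * (0:ℂ) ^ n) := by
    apply summable_of_ne_finset_zero (s := {0})
    intro n hn
    simp only [Finset.mem_singleton] at hn
    simp [zero_pow hn]
  have hopen : IsOpen s := Metric.isOpen_ball
  have hconn : IsPreconnected s := (convex_ball (0:ℂ) r).isPreconnected
  -- derivative of Phi
  have hPhiDeriv : ∀ y ∈ s, HasDerivAt (fun z : ℂ => ∑' n : ℕ, phiTilde α n * z ^ n)
      (∑' n : ℕ, phiTilde α n * ((n:ℂ) * y ^ (n-1))) y := by
    intro y hy
    exact hasDerivAt_tsum_of_isPreconnected hu hopen hconn hderiv hderiv_bound h0s hsum0 hy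
  -- summability at each point of the ball
  have hSφ : ∀ y ∈ s, Summable (fun n : ℕ => phiTilde α n * y ^ n) := by
    intro y hy
    apply Summable.of_norm
    have hyr : ‖y‖ ≤ r := by
      rw [hsdef, Metric.mem_ball, dist_zero_right] at hy; linarith
    have hgs : Summable (fun n : ℕ => (2⁻¹:ℝ)^n) :=
      summable_geometric_of_lt_one (by norm_num) (by norm_num)
    refine Summable.of_nonneg_of_le (fun n => norm_nonneg _) (fun n => ?_) hgs
    rw [norm_mul, norm_pow]
    calc ‖phiTilde α n‖ * ‖y‖ ^ n ≤ K ^ n * r ^ n := by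
          apply mul_le_mul (hφK n) (pow_le_pow_left₀ (norm_nonneg _) hyr n)
            (by positivity) (by positivity)
      _ = (K * r) ^ n := by rw [mul_pow]
      _ ≤ (2⁻¹:ℝ) ^ n := pow_le_pow_left₀ (by positivity) hKr n
  have hSD : ∀ y ∈ s, Summable (fun n : ℕ => phiTilde α n * ((n:ℂ) * y ^ (n-1))) := by
    intro y hy
    exact Summable.of_norm_bounded hu (fun n => hderiv_bound n y hy)
  -- the functional identity (1-y) * D y = α * Phi y on s
  have hkey : ∀ y ∈ s, (1 - y) * (∑' n : ℕ, phiTilde α n * ((n:ℂ) * y ^ (n-1)))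
      = α * ∑' n : ℕ, phiTilde α n * y ^ n := by
    intro y hy
    set D := ∑' n : ℕ, phiTilde α n * ((n:ℂ) * y ^ (n-1)) with hD
    set P := ∑' n : ℕ, phiTilde α n * y ^ n with hP
    have hshift : D = ∑' n : ℕ, phiTilde α (n+1) * (((n:ℂ)+1) * y ^ n) := by
      rw [hD, Summable.tsum_eq_zero_add (hSD y hy)]
      simp
    have hterm : ∀ n : ℕ, phiTilde α (n+1) * (((n:ℂ)+1) * y ^ n)
        = (n : ℂ) * (phiTilde α n * y ^ n) + α * (phiTilde α n * y ^ n) := by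
      intro n
      have := phiTilde_succ hα n
      calc phiTilde α (n+1) * (((n:ℂ)+1) * y ^ n)
          = (((n:ℂ)+1) * phiTilde α (n+1)) * y ^ n := by ring
        _ = (((n:ℂ) + α) * phiTilde α n) * y ^ n := by rw [this]
        _ = (n : ℂ) * (phiTilde α n * y ^ n) + α * (phiTilde α n * y ^ n) := by ring
    have hSn : Summable (fun n : ℕ => (n:ℂ) * (phiTilde α n * y ^ n)) := by
      apply ((hSD y hy).mul_left y).congr
      intro n
      cases n with
      | zero => simp
      | succ m =>
        simp only [Nat.add_sub_cancel]
        push_cast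
        rw [pow_succ]
        ring
    have hSα : Summable (fun n : ℕ => α * (phiTilde α n * y ^ n)) := (hSφ y hy).mul_left α
    have hyD : ∑' n : ℕ, (n:ℂ) * (phiTilde α n * y ^ n) = y * D := by
      rw [hD, ← tsum_mul_left]
      apply tsum_congr
      intro n
      cases n with
      | zero => simp
      | succ m =>
        simp only [Nat.add_sub_cancel]
        push_cast
        rw [pow_succ]
        ring
    have hthis : D = y * D + α * P := by
      calc D = ∑' n : ℕ, phiTilde α (n+1) * (((n:ℂ)+1) * y ^ n) := hshift
        _ = ∑' n : ℕ, ((n:ℂ) * (phiTilde α n * y ^ n) + α * (phiTilde α n * y ^ n)) :=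
            tsum_congr hterm
        _ = (∑' n : ℕ, (n:ℂ) * (phiTilde α n * y ^ n))
            + ∑' n : ℕ, α * (phiTilde α n * y ^ n) := Summable.tsum_add hSn hSα
        _ = y * D + α * P := by rw [hyD, tsum_mul_left, ← hP]
    linear_combination hthis
  -- g := (1-y)^α * Phi y has zero derivative on s
  have hslit : ∀ y ∈ s, (1 - y) ∈ Complex.slitPlane := by
    intro y hy
    have hyr : ‖y‖ < r := by
      rw [hsdef, Metric.mem_ball, dist_zero_right] at hy; exact hy
    rw [Complex.mem_slitPlane_iff]
    left
    simp only [Complex.sub_re, Complex.one_re]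
    have h1 : y.re ≤ ‖y‖ := Complex.re_le_norm y
    have h2 : y.re < r := lt_of_le_of_lt h1 hyr
    linarith [hr4]
  have hne : ∀ y ∈ s, (1 - y) ≠ 0 := fun y hy => Complex.slitPlane_ne_zero (hslit y hy)
  have hgderiv : ∀ y ∈ s,
      HasDerivAt (fun z : ℂ => (1 - z) ^ α * ∑' n : ℕ, phiTilde α n * z ^ n) 0 y := by
    intro y hy
    have h1 : HasDerivAt (fun z : ℂ => 1 - z) (-1) y := by
      simpa using (hasDerivAt_id y).const_sub 1
    have h2 : HasDerivAt (fun z : ℂ => (1 - z) ^ α) (α * (1 - y) ^ (α - 1) * (-1)) y :=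
      h1.cpow_const (hslit y hy)
    have h4 := h2.mul (hPhiDeriv y hy)
    have hexp : (1 - y) ^ (α - 1) * (1 - y) = (1 - y) ^ α := by
      rw [Complex.cpow_sub _ _ (hne y hy), Complex.cpow_one,
        div_mul_cancel₀ _ (hne y hy)]
    have hz : α * (1 - y) ^ (α - 1) * (-1) * (∑' n : ℕ, phiTilde α n * y ^ n)
        + (1 - y) ^ α * (∑' n : ℕ, phiTilde α n * ((n:ℂ) * y ^ (n-1))) = 0 := by
      linear_combination (1 - y) ^ (α - 1) * hkey y hy
        - (∑' n : ℕ, phiTilde α n * ((n:ℂ) * y ^ (n-1))) * hexp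
    rwa [hz] at h4
  -- constancy
  have hzero : ContinuousLinearMap.toSpanSingleton ℂ (0:ℂ) = 0 := by
    ext1; simp
  have hdiff : DifferentiableOn ℂ
      (fun z : ℂ => (1 - z) ^ α * ∑' n : ℕ, phiTilde α n * z ^ n) s :=
    fun y hy => ((hgderiv y hy).differentiableAt).differentiableWithinAt
  have hfz : ∀ y ∈ s, fderivWithin ℂ
      (fun z : ℂ => (1 - z) ^ α * ∑' n : ℕ, phiTilde α n * z ^ n) s y = 0 := by
    intro y hy
    have h := (hgderiv y hy).hasFDerivAt
    rw [hzero] at h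
    exact h.hasFDerivWithinAt.fderivWithin (hopen.uniqueDiffOn y hy)
  have hconst := (convex_ball (0:ℂ) r).is_const_of_fderivWithin_eq_zero hdiff hfz hws h0s
  refine hconst.trans ?_
  simp only [sub_zero, Complex.one_cpow, one_mul]
  rw [tsum_eq_single 0 (fun n hn => by simp [zero_pow hn])]
  simp [phiTilde_zero hα]

set_option maxHeartbeats 1000000 in
/-- The Z-transform identity underlying Theorem 1 of the paper: for `|z|` large the
Z-transform `X(z)` of the solution converges absolutely and satisfies
`(z(1-z⁻¹)^α - (λ-1)) X(z) = z(1-z⁻¹)^(α-1) x₀`. -/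
theorem ztransform_identity (α lam x₀ : ℂ) (hα : α.re ∈ Set.Ioo (0 : ℝ) 1)
    (x : ℕ → ℂ) (hx0 : x 0 = x₀)
    (hrec : ∀ t : ℕ,
      x (t + 1) = x₀ + (lam - 1) * ∑ j ∈ Finset.range (t + 1), phiTilde α (t - j) * x j) :
    ∃ R : ℝ, 1 ≤ R ∧ ∀ z : ℂ, R < ‖z‖ →
      Summable (fun t : ℕ => ‖x t * (z⁻¹) ^ t‖) ∧
      (z * (1 - z⁻¹) ^ α - (lam - 1)) * (∑' t : ℕ, x t * (z⁻¹) ^ t)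
        = z * (1 - z⁻¹) ^ (α - 1) * x₀ := by
  obtain ⟨hα0, -⟩ := hα
  set K := max 1 (‖α‖) with hKdef
  have hK1 : (1:ℝ) ≤ K := le_max_left _ _
  set C := ‖x₀‖ + 1 with hCdef
  have hC1 : (1:ℝ) ≤ C := by
    have := norm_nonneg x₀; simp only [hCdef]; linarith
  set L : ℝ := ‖lam - 1‖ with hLdef
  have hL0 : (0:ℝ) ≤ L := norm_nonneg _
  set M : ℝ := max (2*K) (1 + 2*L) with hMdef
  have hMK : 2*K ≤ M := le_max_left _ _
  have hML : 1 + 2*L ≤ M := le_max_right _ _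
  have hM2 : (2:ℝ) ≤ M := le_trans (by linarith) hMK
  have hM1 : (1:ℝ) ≤ M := by linarith
  have hM0 : (0:ℝ) < M := by linarith
  -- growth bound
  have hgrow : ∀ t : ℕ, ‖x t‖ ≤ C * M ^ t := by
    intro t
    induction t using Nat.strong_induction_on with
    | _ t ih =>
      match t with
      | 0 =>
        simp only [pow_zero, mul_one, hx0, hCdef]; linarith
      | Nat.succ s =>
        rw [hrec s]
        have hsum_le : ‖∑ j ∈ Finset.range (s+1), phiTilde α (s - j) * x j‖
            ≤ ∑ j ∈ Finset.range (s+1), K ^ (s - j) * (C * M ^ j) := by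
          refine le_trans (norm_sum_le _ _) ?_
          apply Finset.sum_le_sum
          intro j hj
          rw [norm_mul]
          exact mul_le_mul (phiTilde_bound hα0 _) (ih j (Finset.mem_range.mp hj))
            (norm_nonneg _) (by positivity)
        have hgeo : ∑ j ∈ Finset.range (s+1), K ^ (s - j) * (C * M ^ j)
            ≤ C * (2 * M ^ s) := by
          have hstep : ∀ j ∈ Finset.range (s+1),
              K ^ (s - j) * (C * M ^ j) ≤ C * ((2⁻¹:ℝ) ^ (s - j) * M ^ s) := by
            intro j hj
            have hjs : j ≤ s := Nat.lt_succ_iff.mp (Finset.mem_range.mp hj)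
            have h1 : K ^ (s-j) ≤ (M/2) ^ (s-j) :=
              pow_le_pow_left₀ (by linarith) (by linarith) _
            have h2 : (M/2) ^ (s-j) * M ^ j = (2⁻¹:ℝ)^(s-j) * M ^ s := by
              rw [div_pow, div_eq_mul_inv, ← inv_pow]
              rw [mul_assoc, mul_comm ((2:ℝ)⁻¹ ^ (s-j)) (M ^ j), ← mul_assoc,
                ← pow_add, Nat.sub_add_cancel hjs]
              ring
            calc K ^ (s - j) * (C * M ^ j) = C * (K ^ (s-j) * M ^ j) := by ring
              _ ≤ C * ((M/2) ^ (s-j) * M ^ j) := by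
                  apply mul_le_mul_of_nonneg_left _ (by linarith)
                  apply mul_le_mul_of_nonneg_right h1 (by positivity)
              _ = C * ((2⁻¹:ℝ)^(s-j) * M ^ s) := by rw [h2]
          calc ∑ j ∈ Finset.range (s+1), K ^ (s - j) * (C * M ^ j)
              ≤ ∑ j ∈ Finset.range (s+1), C * ((2⁻¹:ℝ) ^ (s - j) * M ^ s) :=
                Finset.sum_le_sum hstep
            _ = C * M ^ s * ∑ j ∈ Finset.range (s+1), (2⁻¹:ℝ) ^ (s - j) := by
                rw [Finset.mul_sum]; apply Finset.sum_congr rfl; intros; ring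
            _ = C * M ^ s * ∑ j ∈ Finset.range (s+1), (2⁻¹:ℝ) ^ j := by
                congr 1
                have := Finset.sum_range_reflect (fun j => (2⁻¹:ℝ) ^ j) (s+1)
                simp only [Nat.add_sub_cancel] at this
                rw [← this]
            _ ≤ C * M ^ s * 2 := by
                apply mul_le_mul_of_nonneg_left _ (by positivity)
                have := sum_geometric_two_le (s+1)
                simpa [one_div] using this
            _ = C * (2 * M ^ s) := by ring
        calc ‖x₀ + (lam - 1) * ∑ j ∈ Finset.range (s+1), phiTilde α (s - j) * x j‖
            ≤ ‖x₀‖ + L * ‖∑ j ∈ Finset.range (s+1),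
                phiTilde α (s - j) * x j‖ := by
              refine le_trans (norm_add_le _ _) ?_
              rw [norm_mul]
          _ ≤ ‖x₀‖ + L * (C * (2 * M ^ s)) := by
              have := le_trans hsum_le hgeo
              nlinarith [norm_nonneg (∑ j ∈ Finset.range (s+1),
                phiTilde α (s - j) * x j)]
          _ ≤ C * M ^ (s+1) := by
              have hMs : (1:ℝ) ≤ M ^ s := one_le_pow₀ hM1
              have hx0C : ‖x₀‖ ≤ C - 1 := by simp [hCdef]
              have : C * M ^ (s+1) = C * M ^ s * M := by ring
              rw [this]
              nlinarith [mul_le_mul_of_nonneg_left hML (mul_pos (by linarith : (0:ℝ) < C)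
                (by positivity : (0:ℝ) < M ^ s)).le]
  -- choose R
  refine ⟨max (2*M) (4*(K+1)), le_trans (by linarith) (le_max_left _ _), ?_⟩
  intro z hz
  have hz2M : 2*M < ‖z‖ := lt_of_le_of_lt (le_max_left _ _) hz
  have hz4K : 4*(K+1) < ‖z‖ := lt_of_le_of_lt (le_max_right _ _) hz
  have hzpos : (0:ℝ) < ‖z‖ := by linarith
  have hzne : z ≠ 0 := by
    intro h; rw [h] at hzpos; simp at hzpos
  have habsu : ‖z⁻¹‖ = (‖z‖)⁻¹ := norm_inv _
  have huM : ‖z⁻¹‖ * (2*M) < 1 := by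
    rw [habsu]
    rw [inv_mul_lt_iff₀ hzpos]
    linarith
  have huK : ‖z⁻¹‖ < (2*(K+1))⁻¹ := by
    rw [habsu]
    apply inv_strictAnti₀ (by positivity)
    linarith
  have hu1 : ‖z⁻¹‖ < 1 := by
    rw [habsu]
    rw [inv_lt_one_iff₀]
    right; linarith
  have hu1' : ‖z⁻¹‖ < 1 := hu1
  -- summability of x-series
  have hxu : Summable (fun t : ℕ => ‖x t * (z⁻¹) ^ t‖) := by
    have hMu : M * ‖z⁻¹‖ < 2⁻¹ := by
      rw [habsu]
      have h := inv_strictAnti₀ (by linarith : (0:ℝ) < 2*M) hz2M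
      have h2 : M * (2*M)⁻¹ = 2⁻¹ := by field_simp
      calc M * (‖z‖)⁻¹ < M * (2*M)⁻¹ := mul_lt_mul_of_pos_left h hM0
        _ = 2⁻¹ := h2
    have hgs : Summable (fun t : ℕ => C * (2⁻¹:ℝ) ^ t) :=
      (summable_geometric_of_lt_one (by norm_num) (by norm_num)).mul_left C
    refine Summable.of_nonneg_of_le (fun n => norm_nonneg _) (fun t => ?_) hgs
    rw [norm_mul, norm_pow]
    calc ‖x t‖ * ‖z⁻¹‖ ^ t ≤ (C * M ^ t) * ‖z⁻¹‖ ^ t := by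
          apply mul_le_mul_of_nonneg_right (hgrow t) (by positivity)
      _ = C * (M * ‖z⁻¹‖) ^ t := by rw [mul_pow]; ring
      _ ≤ C * (2⁻¹:ℝ) ^ t := by
          apply mul_le_mul_of_nonneg_left _ (by linarith)
          exact pow_le_pow_left₀ (by positivity) (le_of_lt hMu) t
  -- summability of phi-series
  have hφu : Summable (fun n : ℕ => ‖phiTilde α n * (z⁻¹) ^ n‖) := by
    have hKu : K * ‖z⁻¹‖ < 2⁻¹ := by
      calc K * ‖z⁻¹‖ < K * (2*(K+1))⁻¹ := by
            apply mul_lt_mul_of_pos_left huK (by linarith)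
        _ ≤ 2⁻¹ := by
            rw [mul_inv_le_iff₀ (by positivity)]
            nlinarith
    have hgs : Summable (fun t : ℕ => (2⁻¹:ℝ) ^ t) :=
      summable_geometric_of_lt_one (by norm_num) (by norm_num)
    refine Summable.of_nonneg_of_le (fun n => norm_nonneg _) (fun n => ?_) hgs
    rw [norm_mul, norm_pow]
    calc ‖phiTilde α n‖ * ‖z⁻¹‖ ^ n
        ≤ K ^ n * ‖z⁻¹‖ ^ n := by
          apply mul_le_mul_of_nonneg_right (phiTilde_bound hα0 n) (by positivity)
      _ = (K * ‖z⁻¹‖) ^ n := by rw [mul_pow]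
      _ ≤ (2⁻¹:ℝ) ^ n := pow_le_pow_left₀ (by positivity) (le_of_lt hKu) n
  have hXs : Summable (fun t : ℕ => x t * (z⁻¹) ^ t) := hxu.of_norm
  have hΦs : Summable (fun n : ℕ => phiTilde α n * (z⁻¹) ^ n) := hφu.of_norm
  constructor
  · exact hxu
  -- now the identity
  have hterm : ∀ n : ℕ, ∑ k ∈ Finset.range (n+1),
      (phiTilde α k * (z⁻¹)^k) * (x (n-k) * (z⁻¹)^(n-k))
      = (∑ j ∈ Finset.range (n+1), phiTilde α (n - j) * x j) * (z⁻¹)^n := by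
    intro n
    have h1 : ∀ k ∈ Finset.range (n+1),
        (phiTilde α k * (z⁻¹)^k) * (x (n-k) * (z⁻¹)^(n-k))
        = (phiTilde α k * x (n-k)) * (z⁻¹)^n := by
      intro k hk
      have hk' : k ≤ n := Nat.lt_succ_iff.mp (Finset.mem_range.mp hk)
      rw [show (phiTilde α k * (z⁻¹)^k) * (x (n-k) * (z⁻¹)^(n-k))
        = (phiTilde α k * x (n-k)) * ((z⁻¹)^k * (z⁻¹)^(n-k)) by ring,
        ← pow_add, Nat.add_sub_cancel' hk']
    rw [Finset.sum_congr rfl h1, ← Finset.sum_mul]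
    congr 1
    have h2 := Finset.sum_range_reflect (fun j => phiTilde α (n - j) * x j) (n+1)
    simp only [Nat.add_sub_cancel] at h2
    rw [← h2]
    apply Finset.sum_congr rfl
    intro k hk
    have hk' : k ≤ n := Nat.lt_succ_iff.mp (Finset.mem_range.mp hk)
    rw [Nat.sub_sub_self hk']
  have hcsum : Summable (fun n : ℕ =>
      (∑ j ∈ Finset.range (n+1), phiTilde α (n - j) * x j) * (z⁻¹)^n) :=
    ((summable_norm_sum_mul_range_of_summable_norm hφu hxu).of_norm).congr hterm
  have hcauchy : (∑' n : ℕ, phiTilde α n * (z⁻¹)^n) * (∑' t : ℕ, x t * (z⁻¹)^t)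
      = ∑' n : ℕ, (∑ j ∈ Finset.range (n+1), phiTilde α (n - j) * x j) * (z⁻¹)^n := by
    rw [tsum_mul_tsum_eq_tsum_sum_range_of_summable_norm hφu hxu]
    exact tsum_congr hterm
  have hgeo_sum : ∑' t : ℕ, (z⁻¹)^t = (1 - z⁻¹)⁻¹ :=
    tsum_geometric_of_norm_lt_one hu1'
  have h1u : (1:ℂ) - z⁻¹ ≠ 0 := by
    intro h
    have h2 : (z⁻¹ : ℂ) = 1 := by linear_combination -h
    rw [h2] at hu1
    simp at hu1
  have hE : (∑' t : ℕ, x t * (z⁻¹)^t)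
      = x₀ + (x₀ * z⁻¹ * (1 - z⁻¹)⁻¹
        + (lam - 1) * z⁻¹ * ((∑' n : ℕ, phiTilde α n * (z⁻¹)^n)
            * (∑' t : ℕ, x t * (z⁻¹)^t))) := by
    have htail : ∑' t : ℕ, x (t+1) * (z⁻¹)^(t+1)
        = x₀ * z⁻¹ * (1 - z⁻¹)⁻¹
          + (lam - 1) * z⁻¹ * ((∑' n : ℕ, phiTilde α n * (z⁻¹)^n)
              * (∑' t : ℕ, x t * (z⁻¹)^t)) := by
      calc ∑' t : ℕ, x (t+1) * (z⁻¹)^(t+1)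
          = ∑' t : ℕ, (x₀ * z⁻¹ * (z⁻¹)^t
            + (lam - 1) * z⁻¹ * ((∑ j ∈ Finset.range (t+1), phiTilde α (t - j) * x j)
                * (z⁻¹)^t)) := by
            apply tsum_congr
            intro t
            rw [hrec t, pow_succ]
            ring
        _ = (∑' t : ℕ, x₀ * z⁻¹ * (z⁻¹)^t)
            + ∑' t : ℕ, (lam - 1) * z⁻¹
              * ((∑ j ∈ Finset.range (t+1), phiTilde α (t - j) * x j) * (z⁻¹)^t) :=
            Summable.tsum_add ((summable_geometric_of_norm_lt_one hu1').mul_left _)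
              (hcsum.mul_left _)
        _ = x₀ * z⁻¹ * (1 - z⁻¹)⁻¹
            + (lam - 1) * z⁻¹ * ((∑' n : ℕ, phiTilde α n * (z⁻¹)^n)
                * (∑' t : ℕ, x t * (z⁻¹)^t)) := by
            rw [tsum_mul_left, tsum_mul_left, hgeo_sum, hcauchy]
    calc ∑' t : ℕ, x t * (z⁻¹)^t
        = x 0 * (z⁻¹)^0 + ∑' t : ℕ, x (t+1) * (z⁻¹)^(t+1) := Summable.tsum_eq_zero_add hXs
      _ = x₀ + (x₀ * z⁻¹ * (1 - z⁻¹)⁻¹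
          + (lam - 1) * z⁻¹ * ((∑' n : ℕ, phiTilde α n * (z⁻¹)^n)
              * (∑' t : ℕ, x t * (z⁻¹)^t))) := by
          rw [hx0, pow_zero, mul_one, htail]
  have hbin : (1 - z⁻¹) ^ α * ∑' n : ℕ, phiTilde α n * (z⁻¹)^n = 1 := binom hα0 huK
  have hzu : z * z⁻¹ = 1 := mul_inv_cancel₀ hzne
  have hexp : (1 - z⁻¹) ^ (α - 1) * (1 - z⁻¹) = (1 - z⁻¹) ^ α := by
    rw [Complex.cpow_sub _ _ h1u, Complex.cpow_one, div_mul_cancel₀ _ h1u]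
  have hG : (1 - z⁻¹)⁻¹ * (1 - z⁻¹) = 1 := inv_mul_cancel₀ h1u
  linear_combination (z * (1 - z⁻¹) ^ α) * hE
    + ((lam - 1) * (∑' t : ℕ, x t * (z⁻¹)^t) * (1 - z⁻¹) ^ α
        * (∑' n : ℕ, phiTilde α n * (z⁻¹)^n)) * hzu
    + ((lam - 1) * (∑' t : ℕ, x t * (z⁻¹)^t)) * hbin
    + (z * (1 - z⁻¹) ^ (α - 1) * x₀ * z⁻¹) * hG
    - (z * x₀ * (1 + z⁻¹ * (1 - z⁻¹)⁻¹)) * hexp
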